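/- Let A : ℝ → Matrix (Fin n) (Fin n) ℝ, B : ℝ → Matrix (Fin m) (Fin m) ℝ, P : ℝ → Matrix (Fin n) (Fin m) ℝ be continuous on [0, b], and let C be a constant n × m real matrix. Then U(x) := ℰ(A)(x) · ( ∫_0^x ℱ(−A)(t) · P(t) · ℰ(−B)(t) dt + C ) · ℱ(B)(x) is differentiable on (0, b) and solves the Sylvester-type linear matrix ODE d/dx U(x) = A(x) · U(x) + U(x) · B(x) + P(x), with U(0) = C. -/

import Mathlib

open MeasureTheory Matrix

/- Matrices are equipped with the elementwise sup norm. -/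
attribute [local instance] Matrix.normedAddCommGroup Matrix.normedSpace

/-- Terms of the left integral series: `E_0(x) = 1`, `E_{k+1}(x) = ∫_0^x X(t) * E_k(t) dt`. -/
noncomputable def lterm {ι : Type*} [Fintype ι] [DecidableEq ι]
    (X : ℝ → Matrix ι ι ℝ) : ℕ → ℝ → Matrix ι ι ℝ
  | 0, _ => 1
  | k + 1, x => ∫ t in (0:ℝ)..x, X t * lterm X k t

/-- The left integral series `ℰ(X)(x) = ∑_{k=0}^∞ E_k(x)`. -/
noncomputable def ES {ι : Type*} [Fintype ι] [DecidableEq ι]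
    (X : ℝ → Matrix ι ι ℝ) (x : ℝ) : Matrix ι ι ℝ := ∑' k, lterm X k x

/-- Terms of the right integral series: `F_0(x) = 1`, `F_{k+1}(x) = ∫_0^x F_k(t) * X(t) dt`. -/
noncomputable def rterm {ι : Type*} [Fintype ι] [DecidableEq ι]
    (X : ℝ → Matrix ι ι ℝ) : ℕ → ℝ → Matrix ι ι ℝ
  | 0, _ => 1
  | k + 1, x => ∫ t in (0:ℝ)..x, rterm X k t * X t

/-- The right integral series `ℱ(X)(x) = ∑_{k=0}^∞ F_k(x)`. -/
noncomputable def FS {ι : Type*} [Fintype ι] [DecidableEq ι]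
    (X : ℝ → Matrix ι ι ℝ) (x : ℝ) : Matrix ι ι ℝ := ∑' k, rterm X k x


namespace SylvesterAux

variable {ι κ lo : Type*} [Fintype ι] [Fintype κ] [Fintype lo]

lemma matrix_norm_mul_le (A : Matrix ι κ ℝ) (B : Matrix κ lo ℝ) :
    ‖A * B‖ ≤ (Fintype.card κ : ℝ) * ‖A‖ * ‖B‖ := by
  rw [Matrix.norm_le_iff (by positivity)]
  intro i j
  rw [Matrix.mul_apply]
  calc ‖∑ k, A i k * B k j‖ ≤ ∑ k : κ, ‖A i k * B k j‖ := norm_sum_le _ _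
    _ ≤ ∑ _k : κ, ‖A‖ * ‖B‖ := by
        refine Finset.sum_le_sum fun k _ => ?_
        rw [norm_mul]
        exact mul_le_mul (norm_entry_le_entrywise_sup_norm A)
          (norm_entry_le_entrywise_sup_norm B) (norm_nonneg _) (norm_nonneg _)
    _ = (Fintype.card κ : ℝ) * ‖A‖ * ‖B‖ := by
        rw [Finset.sum_const, Finset.card_univ, nsmul_eq_mul]; ring

lemma matrix_norm_one_le [DecidableEq ι] : ‖(1 : Matrix ι ι ℝ)‖ ≤ 1 := by
  rw [Matrix.norm_le_iff zero_le_one]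
  intro i j
  rw [Matrix.one_apply]
  split <;> simp

theorem HasDerivAt.matrix_mul {f : ℝ → Matrix ι κ ℝ} {g : ℝ → Matrix κ lo ℝ}
    {f' : Matrix ι κ ℝ} {g' : Matrix κ lo ℝ} {x : ℝ}
    (hf : HasDerivAt f f' x) (hg : HasDerivAt g g' x) :
    HasDerivAt (fun t => f t * g t) (f' * g x + f x * g') x := by
  refine hasDerivAt_pi.2 ?_
  intro i
  refine hasDerivAt_pi.2 ?_
  intro j
  simp only [Matrix.mul_apply]
  have hfij : ∀ i k, HasDerivAt (fun t => f t i k) (f' i k) x := fun i k =>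
    (hasDerivAt_pi.1 ((hasDerivAt_pi (φ' := f')).1 hf i) k)
  have hgij : ∀ k j, HasDerivAt (fun t => g t k j) (g' k j) x := fun k j =>
    (hasDerivAt_pi.1 ((hasDerivAt_pi (φ' := g')).1 hg k) j)
  have := HasDerivAt.fun_sum (u := Finset.univ) (fun k _ => ((hfij i k).fun_mul (hgij k j)))
  convert this using 1
  simp [Matrix.add_apply, Matrix.mul_apply, Finset.sum_add_distrib]

lemma ContinuousOn.matrix_mul' {f : ℝ → Matrix ι κ ℝ} {g : ℝ → Matrix κ lo ℝ} {s : Set ℝ}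
    (hf : ContinuousOn f s) (hg : ContinuousOn g s) :
    ContinuousOn (fun t => f t * g t) s :=
  (continuous_fst.matrix_mul (continuous_snd :
    Continuous fun p : Matrix ι κ ℝ × Matrix κ lo ℝ => p.2)).comp_continuousOn (hf.prodMk hg)

instance matrixPMS {a b : Type*} [Fintype a] [Fintype b] :
    TopologicalSpace.PseudoMetrizableSpace (Matrix a b ℝ) :=
  inferInstanceAs (TopologicalSpace.PseudoMetrizableSpace (a → b → ℝ))

noncomputable def mulLeftCLM (A : Matrix ι κ ℝ) : Matrix κ lo ℝ →L[ℝ] Matrix ι lo ℝ :=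
  LinearMap.toContinuousLinearMap
    { toFun := fun Y => A * Y
      map_add' := fun Y Z => Matrix.mul_add A Y Z
      map_smul' := by intro c Y; simp [Matrix.mul_smul] }

@[simp] lemma mulLeftCLM_apply (A : Matrix ι κ ℝ) (Y : Matrix κ lo ℝ) :
    mulLeftCLM A Y = A * Y := rfl

noncomputable def mulRightCLM (B : Matrix κ lo ℝ) : Matrix ι κ ℝ →L[ℝ] Matrix ι lo ℝ :=
  LinearMap.toContinuousLinearMap
    { toFun := fun Y => Y * B
      map_add' := fun Y Z => Matrix.add_mul Y Z B
      map_smul' := by intro c Y; simp [Matrix.smul_mul] }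

@[simp] lemma mulRightCLM_apply (B : Matrix κ lo ℝ) (Y : Matrix ι κ ℝ) :
    mulRightCLM B Y = Y * B := rfl


variable [DecidableEq ι] {X : ℝ → Matrix ι ι ℝ}

lemma lterm_succ_eq (X : ℝ → Matrix ι ι ℝ) (k : ℕ) :
    lterm X (k + 1) = fun x => ∫ t in (0:ℝ)..x, X t * lterm X k t := by
  funext x; simp [lterm]

lemma lterm_continuous (hX : Continuous X) : ∀ k, Continuous (lterm X k)
  | 0 => continuous_const
  | (k+1) => by
    have h := lterm_continuous hX k
    have hc : Continuous fun t => X t * lterm X k t := hX.matrix_mul h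
    rw [lterm_succ_eq]
    exact intervalIntegral.continuous_primitive (fun a b => hc.intervalIntegrable a b) 0

lemma lterm_hasDerivAt (hX : Continuous X) (k : ℕ) (x : ℝ) :
    HasDerivAt (lterm X (k+1)) (X x * lterm X k x) x := by
  have hc : Continuous fun t => X t * lterm X k t := hX.matrix_mul (lterm_continuous hX k)
  rw [lterm_succ_eq]
  exact intervalIntegral.integral_hasDerivAt_right (hc.intervalIntegrable _ _)
    (hc.stronglyMeasurableAtFilter _ _) hc.continuousAt

lemma lterm_norm_le (hX : Continuous X) {M r : ℝ} (hM : 0 ≤ M)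
    (hXM : ∀ t ∈ Set.Icc (0:ℝ) r, ‖X t‖ ≤ M) :
    ∀ k, ∀ x ∈ Set.Icc (0:ℝ) r,
      ‖lterm X k x‖ ≤ ((Fintype.card ι : ℝ) * M) ^ k * x ^ k / (Nat.factorial k) := by
  intro k
  induction k with
  | zero => intro x _; simpa [lterm] using matrix_norm_one_le
  | succ k ih =>
    intro x hx
    obtain ⟨hx0, hxr⟩ := hx
    set c : ℝ := (Fintype.card ι : ℝ) * M with hc
    have hc0 : 0 ≤ c := by positivity
    have hg : Continuous fun t : ℝ => c ^ (k+1) * t ^ k / (Nat.factorial k) := by continuity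
    have key : ‖∫ t in (0:ℝ)..x, X t * lterm X k t‖ ≤
        |∫ t in (0:ℝ)..x, c^(k+1) * t^k / (Nat.factorial k)| := by
      apply intervalIntegral.norm_integral_le_abs_of_norm_le
      · refine ((ae_restrict_mem measurableSet_uIoc).mono ?_)
        intro t ht
        rw [Set.uIoc_of_le hx0] at ht
        have ht' : t ∈ Set.Icc (0:ℝ) r := ⟨ht.1.le, ht.2.trans hxr⟩
        calc ‖X t * lterm X k t‖
            ≤ (Fintype.card ι : ℝ) * ‖X t‖ * ‖lterm X k t‖ := matrix_norm_mul_le _ _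
          _ ≤ (Fintype.card ι : ℝ) * M * (c ^ k * t ^ k / (Nat.factorial k)) := by
              apply mul_le_mul _ (ih t ht') (norm_nonneg _) (by positivity)
              exact mul_le_mul_of_nonneg_left (hXM t ht') (by positivity)
          _ = c^(k+1) * t^k / (Nat.factorial k) := by rw [hc]; ring
      · exact hg.intervalIntegrable _ _
    rw [lterm_succ_eq]
    refine key.trans ?_
    have hval : (∫ t in (0:ℝ)..x, c^(k+1) * t^k / (Nat.factorial k))
        = c^(k+1) * x^(k+1) / (Nat.factorial (k+1)) := by
      have h1 : ∀ t:ℝ, c^(k+1) * t^k / (Nat.factorial k)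
          = (c^(k+1) / (Nat.factorial k)) * t^k := fun t => by ring
      simp_rw [h1]
      rw [intervalIntegral.integral_const_mul, integral_pow,
        zero_pow (Nat.succ_ne_zero k), sub_zero, Nat.factorial_succ]
      push_cast
      rw [div_mul_div_comm, mul_comm ((k:ℝ)+1)]
    rw [hval, abs_of_nonneg (by positivity)]

lemma lterm_norm_le' (hX : Continuous X) {M r : ℝ} (hM : 0 ≤ M) (hr : 0 ≤ r)
    (hXM : ∀ t ∈ Set.Icc (0:ℝ) r, ‖X t‖ ≤ M) (k : ℕ) {x : ℝ} (hx : x ∈ Set.Icc (0:ℝ) r) :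
    ‖lterm X k x‖ ≤ ((Fintype.card ι : ℝ) * M * r) ^ k / (Nat.factorial k) := by
  refine (lterm_norm_le hX hM hXM k x hx).trans ?_
  obtain ⟨hx1, hx2⟩ := hx
  have h : ((Fintype.card ι : ℝ) * M) ^ k * x ^ k ≤ ((Fintype.card ι : ℝ) * M * r) ^ k := by
    conv_rhs => rw [mul_pow]
    exact mul_le_mul_of_nonneg_left (pow_le_pow_left₀ hx1 hx2 k) (by positivity)
  exact (div_le_div_iff_of_pos_right (by positivity)).2 h

lemma summable_lterm (hX : Continuous X) {M r : ℝ} (hM : 0 ≤ M) (hr : 0 ≤ r)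
    (hXM : ∀ t ∈ Set.Icc (0:ℝ) r, ‖X t‖ ≤ M) {x : ℝ} (hx : x ∈ Set.Icc (0:ℝ) r) :
    Summable fun k => lterm X k x :=
  Summable.of_norm_bounded (Real.summable_pow_div_factorial _)
    (fun k => lterm_norm_le' hX hM hr hXM k hx)

lemma ES_continuousOn (hX : Continuous X) {M r : ℝ} (hM : 0 ≤ M) (hr : 0 ≤ r)
    (hXM : ∀ t ∈ Set.Icc (0:ℝ) r, ‖X t‖ ≤ M) :
    ContinuousOn (ES X) (Set.Icc (0:ℝ) r) :=
  continuousOn_tsum (fun k => (lterm_continuous hX k).continuousOn)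
    (Real.summable_pow_div_factorial _)
    (fun k x hx => lterm_norm_le' hX hM hr hXM k hx)

lemma ES_zero (X : ℝ → Matrix ι ι ℝ) : ES X 0 = 1 := by
  rw [ES, tsum_eq_single 0]
  · rfl
  · intro k hk
    cases k with
    | zero => exact absurd rfl hk
    | succ k => rw [lterm_succ_eq]; exact intervalIntegral.integral_same

lemma ES_hasDerivAt (hX : Continuous X) {r x : ℝ} (hx : x ∈ Set.Ioo (0:ℝ) r) :
    HasDerivAt (ES X) (X x * ES X x) x := by
  have hr : 0 ≤ r := (hx.1.trans hx.2).le
  obtain ⟨M0, hM0⟩ := isCompact_Icc.exists_bound_of_continuousOn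
    (hX.continuousOn (s := Set.Icc (0:ℝ) r))
  set M : ℝ := max M0 0 with hMdef
  have hM : 0 ≤ M := le_max_right _ _
  have hXM : ∀ t ∈ Set.Icc (0:ℝ) r, ‖X t‖ ≤ M := fun t ht =>
    (hM0 t ht).trans (le_max_left _ _)
  set c : ℝ := (Fintype.card ι : ℝ) * M with hc
  have hc0 : 0 ≤ c := by positivity
  set g' : ℕ → ℝ → Matrix ι ι ℝ :=
    fun n y => Nat.rec 0 (fun k _ => X y * lterm X k y) n with hg'def
  set u : ℕ → ℝ := fun n => Nat.rec c (fun k _ => c^(k+1) * r^k / (Nat.factorial k)) n with hudef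
  have hu : Summable u := by
    have h1 : (fun k => u (k+1)) = fun k => c * ((c*r)^k / (Nat.factorial k)) := by
      funext k
      show c^(k+1) * r^k / (Nat.factorial k) = _
      rw [mul_pow]; ring
    have h2 : Summable (fun k => u (k+1)) := by
      rw [h1]; exact (Real.summable_pow_div_factorial (c*r)).mul_left c
    exact (summable_nat_add_iff 1).1 h2
  have hbound : ∀ n y, y ∈ Set.Ioo (0:ℝ) r → ‖g' n y‖ ≤ u n := by
    intro n y hy
    have hy' : y ∈ Set.Icc (0:ℝ) r := ⟨hy.1.le, hy.2.le⟩
    cases n with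
    | zero =>
      show ‖(0 : Matrix ι ι ℝ)‖ ≤ c
      simpa using hc0
    | succ k =>
      show ‖X y * lterm X k y‖ ≤ c^(k+1) * r^k / (Nat.factorial k)
      calc ‖X y * lterm X k y‖
          ≤ (Fintype.card ι : ℝ) * ‖X y‖ * ‖lterm X k y‖ := matrix_norm_mul_le _ _
        _ ≤ (Fintype.card ι : ℝ) * M * (c ^ k * y ^ k / (Nat.factorial k)) := by
            apply mul_le_mul _ (lterm_norm_le hX hM hXM k y hy') (norm_nonneg _) (by positivity)
            exact mul_le_mul_of_nonneg_left (hXM y hy') (by positivity)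
        _ ≤ c * (c ^ k * r ^ k / (Nat.factorial k)) := by
            rw [← hc]
            obtain ⟨hy1, hy2⟩ := hy'
            gcongr
        _ = c^(k+1) * r^k / (Nat.factorial k) := by ring
  have hderiv : ∀ n y, y ∈ Set.Ioo (0:ℝ) r → HasDerivAt (lterm X n) (g' n y) y := by
    intro n y _
    cases n with
    | zero =>
      show HasDerivAt (lterm X 0) (0 : Matrix ι ι ℝ) y
      have : lterm X 0 = fun _ : ℝ => (1 : Matrix ι ι ℝ) := by funext t; rfl
      rw [this]; exact hasDerivAt_const _ _
    | succ k => exact lterm_hasDerivAt hX k y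
  have hsum0 : Summable fun n => lterm X n x := summable_lterm hX hM hr hXM ⟨hx.1.le, hx.2.le⟩
  have main := hasDerivAt_tsum_of_isPreconnected hu isOpen_Ioo
    (convex_Ioo (0:ℝ) r).isPreconnected hderiv hbound hx hsum0 hx
  have hsum' : Summable fun n => g' n x :=
    Summable.of_norm_bounded hu (fun n => hbound n x hx)
  have hval : (∑' n, g' n x) = X x * ES X x := by
    rw [Summable.tsum_eq_zero_add hsum']
    show (0 : Matrix ι ι ℝ) + (∑' k, X x * lterm X k x) = _
    rw [zero_add]
    have : (fun k => X x * lterm X k x) = fun k => mulLeftCLM (X x) (lterm X k x) := rfl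
    rw [this, ← (mulLeftCLM (X x)).map_tsum hsum0]
    rfl
  rw [← hval]
  exact main


lemma rterm_succ_eq (X : ℝ → Matrix ι ι ℝ) (k : ℕ) :
    rterm X (k + 1) = fun x => ∫ t in (0:ℝ)..x, rterm X k t * X t := by
  funext x; simp [rterm]

lemma rterm_continuous (hX : Continuous X) : ∀ k, Continuous (rterm X k)
  | 0 => continuous_const
  | (k+1) => by
    have h := rterm_continuous hX k
    have hc : Continuous fun t => rterm X k t * X t := h.matrix_mul hX
    rw [rterm_succ_eq]
    exact intervalIntegral.continuous_primitive (fun a b => hc.intervalIntegrable a b) 0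

lemma rterm_hasDerivAt (hX : Continuous X) (k : ℕ) (x : ℝ) :
    HasDerivAt (rterm X (k+1)) (rterm X k x * X x) x := by
  have hc : Continuous fun t => rterm X k t * X t := (rterm_continuous hX k).matrix_mul hX
  rw [rterm_succ_eq]
  exact intervalIntegral.integral_hasDerivAt_right (hc.intervalIntegrable _ _)
    (hc.stronglyMeasurableAtFilter _ _) hc.continuousAt

lemma rterm_norm_le (hX : Continuous X) {M r : ℝ} (hM : 0 ≤ M)
    (hXM : ∀ t ∈ Set.Icc (0:ℝ) r, ‖X t‖ ≤ M) :
    ∀ k, ∀ x ∈ Set.Icc (0:ℝ) r,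
      ‖rterm X k x‖ ≤ ((Fintype.card ι : ℝ) * M) ^ k * x ^ k / (Nat.factorial k) := by
  intro k
  induction k with
  | zero => intro x _; simpa [rterm] using matrix_norm_one_le
  | succ k ih =>
    intro x hx
    obtain ⟨hx0, hxr⟩ := hx
    set c : ℝ := (Fintype.card ι : ℝ) * M with hc
    have hc0 : 0 ≤ c := by positivity
    have hg : Continuous fun t : ℝ => c ^ (k+1) * t ^ k / (Nat.factorial k) := by continuity
    have key : ‖∫ t in (0:ℝ)..x, rterm X k t * X t‖ ≤
        |∫ t in (0:ℝ)..x, c^(k+1) * t^k / (Nat.factorial k)| := by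
      apply intervalIntegral.norm_integral_le_abs_of_norm_le
      · refine ((ae_restrict_mem measurableSet_uIoc).mono ?_)
        intro t ht
        rw [Set.uIoc_of_le hx0] at ht
        have ht' : t ∈ Set.Icc (0:ℝ) r := ⟨ht.1.le, ht.2.trans hxr⟩
        calc ‖rterm X k t * X t‖
            ≤ (Fintype.card ι : ℝ) * ‖rterm X k t‖ * ‖X t‖ := matrix_norm_mul_le _ _
          _ ≤ (Fintype.card ι : ℝ) * (c ^ k * t ^ k / (Nat.factorial k)) * M := by
              have ht0 : (0:ℝ) ≤ t := ht'.1
              apply mul_le_mul _ (hXM t ht') (norm_nonneg _)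
                (mul_nonneg (Nat.cast_nonneg _) (div_nonneg
                  (mul_nonneg (pow_nonneg hc0 _) (pow_nonneg ht0 _)) (Nat.cast_nonneg _)))
              exact mul_le_mul_of_nonneg_left (ih t ht') (by positivity)
          _ = c^(k+1) * t^k / (Nat.factorial k) := by rw [hc]; ring
      · exact hg.intervalIntegrable _ _
    rw [rterm_succ_eq]
    refine key.trans ?_
    have hval : (∫ t in (0:ℝ)..x, c^(k+1) * t^k / (Nat.factorial k))
        = c^(k+1) * x^(k+1) / (Nat.factorial (k+1)) := by
      have h1 : ∀ t:ℝ, c^(k+1) * t^k / (Nat.factorial k)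
          = (c^(k+1) / (Nat.factorial k)) * t^k := fun t => by ring
      simp_rw [h1]
      rw [intervalIntegral.integral_const_mul, integral_pow,
        zero_pow (Nat.succ_ne_zero k), sub_zero, Nat.factorial_succ]
      push_cast
      rw [div_mul_div_comm, mul_comm ((k:ℝ)+1)]
    rw [hval, abs_of_nonneg (by positivity)]

lemma rterm_norm_le' (hX : Continuous X) {M r : ℝ} (hM : 0 ≤ M) (hr : 0 ≤ r)
    (hXM : ∀ t ∈ Set.Icc (0:ℝ) r, ‖X t‖ ≤ M) (k : ℕ) {x : ℝ} (hx : x ∈ Set.Icc (0:ℝ) r) :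
    ‖rterm X k x‖ ≤ ((Fintype.card ι : ℝ) * M * r) ^ k / (Nat.factorial k) := by
  refine (rterm_norm_le hX hM hXM k x hx).trans ?_
  obtain ⟨hx1, hx2⟩ := hx
  have h : ((Fintype.card ι : ℝ) * M) ^ k * x ^ k ≤ ((Fintype.card ι : ℝ) * M * r) ^ k := by
    conv_rhs => rw [mul_pow]
    exact mul_le_mul_of_nonneg_left (pow_le_pow_left₀ hx1 hx2 k) (by positivity)
  exact (div_le_div_iff_of_pos_right (by positivity)).2 h

lemma summable_rterm (hX : Continuous X) {M r : ℝ} (hM : 0 ≤ M) (hr : 0 ≤ r)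
    (hXM : ∀ t ∈ Set.Icc (0:ℝ) r, ‖X t‖ ≤ M) {x : ℝ} (hx : x ∈ Set.Icc (0:ℝ) r) :
    Summable fun k => rterm X k x :=
  Summable.of_norm_bounded (Real.summable_pow_div_factorial _)
    (fun k => rterm_norm_le' hX hM hr hXM k hx)

lemma FS_continuousOn (hX : Continuous X) {M r : ℝ} (hM : 0 ≤ M) (hr : 0 ≤ r)
    (hXM : ∀ t ∈ Set.Icc (0:ℝ) r, ‖X t‖ ≤ M) :
    ContinuousOn (FS X) (Set.Icc (0:ℝ) r) :=
  continuousOn_tsum (fun k => (rterm_continuous hX k).continuousOn)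
    (Real.summable_pow_div_factorial _)
    (fun k x hx => rterm_norm_le' hX hM hr hXM k hx)

lemma FS_zero (X : ℝ → Matrix ι ι ℝ) : FS X 0 = 1 := by
  rw [FS, tsum_eq_single 0]
  · rfl
  · intro k hk
    cases k with
    | zero => exact absurd rfl hk
    | succ k => rw [rterm_succ_eq]; exact intervalIntegral.integral_same

lemma FS_hasDerivAt (hX : Continuous X) {r x : ℝ} (hx : x ∈ Set.Ioo (0:ℝ) r) :
    HasDerivAt (FS X) (FS X x * X x) x := by
  have hr : 0 ≤ r := (hx.1.trans hx.2).le
  obtain ⟨M0, hM0⟩ := isCompact_Icc.exists_bound_of_continuousOn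
    (hX.continuousOn (s := Set.Icc (0:ℝ) r))
  set M : ℝ := max M0 0 with hMdef
  have hM : 0 ≤ M := le_max_right _ _
  have hXM : ∀ t ∈ Set.Icc (0:ℝ) r, ‖X t‖ ≤ M := fun t ht =>
    (hM0 t ht).trans (le_max_left _ _)
  set c : ℝ := (Fintype.card ι : ℝ) * M with hc
  have hc0 : 0 ≤ c := by positivity
  set g' : ℕ → ℝ → Matrix ι ι ℝ :=
    fun n y => Nat.rec 0 (fun k _ => rterm X k y * X y) n with hg'def
  set u : ℕ → ℝ := fun n => Nat.rec c (fun k _ => c^(k+1) * r^k / (Nat.factorial k)) n with hudef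
  have hu : Summable u := by
    have h1 : (fun k => u (k+1)) = fun k => c * ((c*r)^k / (Nat.factorial k)) := by
      funext k
      show c^(k+1) * r^k / (Nat.factorial k) = _
      rw [mul_pow]; ring
    have h2 : Summable (fun k => u (k+1)) := by
      rw [h1]; exact (Real.summable_pow_div_factorial (c*r)).mul_left c
    exact (summable_nat_add_iff 1).1 h2
  have hbound : ∀ n y, y ∈ Set.Ioo (0:ℝ) r → ‖g' n y‖ ≤ u n := by
    intro n y hy
    have hy' : y ∈ Set.Icc (0:ℝ) r := ⟨hy.1.le, hy.2.le⟩
    cases n with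
    | zero =>
      show ‖(0 : Matrix ι ι ℝ)‖ ≤ c
      simpa using hc0
    | succ k =>
      show ‖rterm X k y * X y‖ ≤ c^(k+1) * r^k / (Nat.factorial k)
      calc ‖rterm X k y * X y‖
          ≤ (Fintype.card ι : ℝ) * ‖rterm X k y‖ * ‖X y‖ := matrix_norm_mul_le _ _
        _ ≤ (Fintype.card ι : ℝ) * (c ^ k * y ^ k / (Nat.factorial k)) * M := by
            have hy0 : (0:ℝ) ≤ y := hy'.1
            apply mul_le_mul _ (hXM y hy') (norm_nonneg _)
              (mul_nonneg (Nat.cast_nonneg _) (div_nonneg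
                (mul_nonneg (pow_nonneg hc0 _) (pow_nonneg hy0 _)) (Nat.cast_nonneg _)))
            exact mul_le_mul_of_nonneg_left (rterm_norm_le hX hM hXM k y hy') (by positivity)
        _ ≤ (Fintype.card ι : ℝ) * (c ^ k * r ^ k / (Nat.factorial k)) * M := by
            obtain ⟨hy1, hy2⟩ := hy'
            gcongr
        _ = c^(k+1) * r^k / (Nat.factorial k) := by rw [hc]; ring
  have hderiv : ∀ n y, y ∈ Set.Ioo (0:ℝ) r → HasDerivAt (rterm X n) (g' n y) y := by
    intro n y _
    cases n with
    | zero =>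
      show HasDerivAt (rterm X 0) (0 : Matrix ι ι ℝ) y
      have : rterm X 0 = fun _ : ℝ => (1 : Matrix ι ι ℝ) := by funext t; rfl
      rw [this]; exact hasDerivAt_const _ _
    | succ k => exact rterm_hasDerivAt hX k y
  have hsum0 : Summable fun n => rterm X n x := summable_rterm hX hM hr hXM ⟨hx.1.le, hx.2.le⟩
  have main := hasDerivAt_tsum_of_isPreconnected hu isOpen_Ioo
    (convex_Ioo (0:ℝ) r).isPreconnected hderiv hbound hx hsum0 hx
  have hsum' : Summable fun n => g' n x :=
    Summable.of_norm_bounded hu (fun n => hbound n x hx)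
  have hval : (∑' n, g' n x) = FS X x * X x := by
    rw [Summable.tsum_eq_zero_add hsum']
    show (0 : Matrix ι ι ℝ) + (∑' k, rterm X k x * X x) = _
    rw [zero_add]
    have : (fun k => rterm X k x * X x) = fun k => mulRightCLM (X x) (rterm X k x) := rfl
    rw [this, ← (mulRightCLM (X x)).map_tsum hsum0]
    rfl
  rw [← hval]
  exact main


lemma ES_FS_continuousOn (hX : Continuous X) {r : ℝ} (hr : 0 ≤ r) :
    ContinuousOn (ES X) (Set.Icc (0:ℝ) r) ∧ ContinuousOn (FS X) (Set.Icc (0:ℝ) r) := by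
  obtain ⟨M0, hM0⟩ := isCompact_Icc.exists_bound_of_continuousOn
    (hX.continuousOn (s := Set.Icc (0:ℝ) r))
  have hXM : ∀ t ∈ Set.Icc (0:ℝ) r, ‖X t‖ ≤ max M0 0 := fun t ht =>
    (hM0 t ht).trans (le_max_left _ _)
  exact ⟨ES_continuousOn hX (le_max_right _ _) hr hXM,
    FS_continuousOn hX (le_max_right _ _) hr hXM⟩

lemma FS_neg_mul_ES (hX : Continuous X) {r x : ℝ} (hx : x ∈ Set.Ioo (0:ℝ) r) :
    FS (fun s => -X s) x * ES X x = 1 := by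
  have hr0 : (0:ℝ) < r := hx.1.trans hx.2
  set Y : ℝ → Matrix ι ι ℝ := fun s => -X s with hY
  have hYc : Continuous Y := hX.neg
  set W : ℝ → Matrix ι ι ℝ := fun t => FS Y t * ES X t with hW
  have hder : ∀ t ∈ Set.Ioo (0:ℝ) r, HasDerivAt W 0 t := by
    intro t ht
    have h1 := FS_hasDerivAt hYc ht
    have h2 := ES_hasDerivAt hX ht
    have h3 := HasDerivAt.matrix_mul h1 h2
    convert h3 using 1
    simp [hY, Matrix.mul_assoc, Matrix.neg_mul, Matrix.mul_neg]
  have hconst : ∀ y ∈ Set.Ioo (0:ℝ) r, ∀ z ∈ Set.Ioo (0:ℝ) r, W y = W z := by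
    intro y hy z hz
    refine (convex_Ioo (0:ℝ) r).is_const_of_fderivWithin_eq_zero (𝕜 := ℝ)
      (fun p hp => ((hder p hp).differentiableAt).differentiableWithinAt) ?_ hy hz
    intro p hp
    rw [fderivWithin_of_isOpen isOpen_Ioo hp]
    have h4 : HasFDerivAt W ((1 : ℝ →L[ℝ] ℝ).smulRight (0 : Matrix ι ι ℝ)) p :=
      (hder p hp)
    refine h4.fderiv.trans ?_
    ext v
    simp
    rfl
  have hcontW : ContinuousOn W (Set.Icc (0:ℝ) r) :=
    ContinuousOn.matrix_mul' (ES_FS_continuousOn hYc hr0.le).2 (ES_FS_continuousOn hX hr0.le).1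
  have hW0 : W 0 = 1 := by
    show FS Y 0 * ES X 0 = 1
    rw [ES_zero, FS_zero, Matrix.mul_one]
  have hne : (nhdsWithin (0:ℝ) (Set.Ioo (0:ℝ) r)).NeBot := by
    rw [← mem_closure_iff_nhdsWithin_neBot, closure_Ioo (ne_of_lt hr0)]
    exact ⟨le_refl 0, hr0.le⟩
  have h1 : Filter.Tendsto W (nhdsWithin (0:ℝ) (Set.Ioo (0:ℝ) r)) (nhds (W 0)) :=
    (hcontW 0 ⟨le_refl 0, hr0.le⟩).mono_left (nhdsWithin_mono _ Set.Ioo_subset_Icc_self)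
  have h2 : Filter.Tendsto W (nhdsWithin (0:ℝ) (Set.Ioo (0:ℝ) r)) (nhds (W x)) := by
    apply Filter.Tendsto.congr' _ tendsto_const_nhds
    filter_upwards [self_mem_nhdsWithin] with t ht
    exact hconst x hx t ht
  have := tendsto_nhds_unique h2 h1
  show W x = 1
  rw [this, hW0]

lemma ES_mul_FS_neg (hX : Continuous X) {r x : ℝ} (hx : x ∈ Set.Ioo (0:ℝ) r) :
    ES X x * FS (fun s => -X s) x = 1 :=
  mul_eq_one_comm.mpr (FS_neg_mul_ES hX hx)

lemma ES_neg_mul_FS (hX : Continuous X) {r x : ℝ} (hx : x ∈ Set.Ioo (0:ℝ) r) :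
    ES (fun s => -X s) x * FS X x = 1 := by
  have h := FS_neg_mul_ES (X := fun s => -X s) hX.neg hx
  simp only [neg_neg] at h
  exact mul_eq_one_comm.mp h


lemma lterm_congr {Y : ℝ → Matrix ι ι ℝ} {b : ℝ}
    (h : ∀ t ∈ Set.Icc (0:ℝ) b, X t = Y t) :
    ∀ k, ∀ x ∈ Set.Icc (0:ℝ) b, lterm X k x = lterm Y k x := by
  intro k
  induction k with
  | zero => intro x _; rfl
  | succ k ih =>
    intro x hx
    rw [lterm_succ_eq, lterm_succ_eq]
    apply intervalIntegral.integral_congr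
    intro t ht
    rw [Set.uIcc_of_le hx.1] at ht
    have ht' : t ∈ Set.Icc (0:ℝ) b := ⟨ht.1, ht.2.trans hx.2⟩
    show X t * lterm X k t = Y t * lterm Y k t
    rw [h t ht', ih t ht']

lemma rterm_congr {Y : ℝ → Matrix ι ι ℝ} {b : ℝ}
    (h : ∀ t ∈ Set.Icc (0:ℝ) b, X t = Y t) :
    ∀ k, ∀ x ∈ Set.Icc (0:ℝ) b, rterm X k x = rterm Y k x := by
  intro k
  induction k with
  | zero => intro x _; rfl
  | succ k ih =>
    intro x hx
    rw [rterm_succ_eq, rterm_succ_eq]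
    apply intervalIntegral.integral_congr
    intro t ht
    rw [Set.uIcc_of_le hx.1] at ht
    have ht' : t ∈ Set.Icc (0:ℝ) b := ⟨ht.1, ht.2.trans hx.2⟩
    show rterm X k t * X t = rterm Y k t * Y t
    rw [h t ht', ih t ht']

lemma ES_congr {Y : ℝ → Matrix ι ι ℝ} {b x : ℝ}
    (h : ∀ t ∈ Set.Icc (0:ℝ) b, X t = Y t) (hx : x ∈ Set.Icc (0:ℝ) b) :
    ES X x = ES Y x :=
  tsum_congr fun k => lterm_congr h k x hx

lemma FS_congr {Y : ℝ → Matrix ι ι ℝ} {b x : ℝ}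
    (h : ∀ t ∈ Set.Icc (0:ℝ) b, X t = Y t) (hx : x ∈ Set.Icc (0:ℝ) b) :
    FS X x = FS Y x :=
  tsum_congr fun k => rterm_congr h k x hx


end SylvesterAux

open SylvesterAux

/-- `U(x) = ℰ(A)(x)·(∫_0^x ℱ(−A)(t)·P(t)·ℰ(−B)(t) dt + C)·ℱ(B)(x)` solves the
Sylvester-type ODE `U' = A·U + U·B + P`, `U 0 = C`. -/
theorem sylvester_ODE_solution {n m : ℕ} (b : ℝ)
    (A : ℝ → Matrix (Fin n) (Fin n) ℝ) (B : ℝ → Matrix (Fin m) (Fin m) ℝ)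
    (P : ℝ → Matrix (Fin n) (Fin m) ℝ) (C : Matrix (Fin n) (Fin m) ℝ)
    (hA : ContinuousOn A (Set.Icc 0 b)) (hB : ContinuousOn B (Set.Icc 0 b))
    (hP : ContinuousOn P (Set.Icc 0 b))
    (U : ℝ → Matrix (Fin n) (Fin m) ℝ)
    (hU : ∀ x, U x = ES A x *
      ((∫ t in (0:ℝ)..x, FS (fun s => -A s) t * P t * ES (fun s => -B s) t) + C) * FS B x) :
    (∀ x ∈ Set.Ioo (0:ℝ) b, HasDerivAt U (A x * U x + U x * B x + P x) x) ∧ U 0 = C := by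
  constructor
  · intro x hx
    have hb : (0:ℝ) < b := hx.1.trans hx.2
    -- continuous extensions by clamping to [0, b]
    set proj : ℝ → ℝ := fun t => min (max t 0) b with hproj
    have hprojc : Continuous proj := (continuous_id.max continuous_const).min continuous_const
    have hprojmem : ∀ t, proj t ∈ Set.Icc (0:ℝ) b := fun t =>
      ⟨le_min (le_max_right t 0) hb.le, min_le_right _ _⟩
    have hprojeq : ∀ t ∈ Set.Icc (0:ℝ) b, proj t = t := fun t ht => by
      rw [hproj]; simp only [max_eq_left ht.1, min_eq_left ht.2]
    set A' : ℝ → Matrix (Fin n) (Fin n) ℝ := fun t => A (proj t) with hA'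
    set B' : ℝ → Matrix (Fin m) (Fin m) ℝ := fun t => B (proj t) with hB'
    set P' : ℝ → Matrix (Fin n) (Fin m) ℝ := fun t => P (proj t) with hP'
    have hA'c : Continuous A' := hA.comp_continuous hprojc hprojmem
    have hB'c : Continuous B' := hB.comp_continuous hprojc hprojmem
    have hP'c : Continuous P' := hP.comp_continuous hprojc hprojmem
    have hAeq : ∀ t ∈ Set.Icc (0:ℝ) b, A t = A' t := fun t ht => by
      rw [hA']; simp only [hprojeq t ht]
    have hBeq : ∀ t ∈ Set.Icc (0:ℝ) b, B t = B' t := fun t ht => by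
      rw [hB']; simp only [hprojeq t ht]
    have hPeq : ∀ t ∈ Set.Icc (0:ℝ) b, P t = P' t := fun t ht => by
      rw [hP']; simp only [hprojeq t ht]
    have hAneq : ∀ t ∈ Set.Icc (0:ℝ) b, (fun s => -A s) t = (fun s => -A' s) t :=
      fun t ht => by simp only [hAeq t ht]
    have hBneq : ∀ t ∈ Set.Icc (0:ℝ) b, (fun s => -B s) t = (fun s => -B' s) t :=
      fun t ht => by simp only [hBeq t ht]
    -- primed objects
    set g : ℝ → Matrix (Fin n) (Fin m) ℝ :=
      fun t => FS (fun s => -A' s) t * P' t * ES (fun s => -B' s) t with hg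
    set G : ℝ → Matrix (Fin n) (Fin m) ℝ := fun y => ∫ t in (0:ℝ)..y, g t with hG
    set V : ℝ → Matrix (Fin n) (Fin m) ℝ := fun y => ES A' y * (G y + C) * FS B' y with hV
    -- U agrees with V on [0, b]
    have hUV : ∀ y ∈ Set.Icc (0:ℝ) b, U y = V y := by
      intro y hy
      rw [hU y, hV]
      have e1 : ES A y = ES A' y := ES_congr hAeq hy
      have e2 : FS B y = FS B' y := FS_congr hBeq hy
      have e3 : (∫ t in (0:ℝ)..y, FS (fun s => -A s) t * P t * ES (fun s => -B s) t) = G y := by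
        rw [hG]
        apply intervalIntegral.integral_congr
        intro t ht
        rw [Set.uIcc_of_le hy.1] at ht
        have ht' : t ∈ Set.Icc (0:ℝ) b := ⟨ht.1, ht.2.trans hy.2⟩
        rw [hg]
        simp only
        rw [FS_congr hAneq ht', ES_congr hBneq ht', hPeq t ht']
      rw [e1, e2, e3]
    -- derivative of G
    have hFScont : ContinuousOn (FS (fun s => -A' s)) (Set.Icc (0:ℝ) b) :=
      (ES_FS_continuousOn hA'c.neg hb.le).2
    have hEScont : ContinuousOn (ES (fun s => -B' s)) (Set.Icc (0:ℝ) b) :=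
      (ES_FS_continuousOn hB'c.neg hb.le).1
    have hgcont : ContinuousOn g (Set.Icc (0:ℝ) b) :=
      ContinuousOn.matrix_mul' (ContinuousOn.matrix_mul' hFScont hP'c.continuousOn) hEScont
    have hIccmem : Set.Icc (0:ℝ) b ∈ nhds x :=
      Filter.mem_of_superset (isOpen_Ioo.mem_nhds hx) Set.Ioo_subset_Icc_self
    have hGderiv : HasDerivAt G (g x) x := by
      rw [hG]
      apply intervalIntegral.integral_hasDerivAt_right
      · exact (hgcont.mono (by
          rw [Set.uIcc_of_le hx.1.le]
          exact Set.Icc_subset_Icc le_rfl hx.2.le)).intervalIntegrable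
      · exact (hgcont.mono Set.Ioo_subset_Icc_self).stronglyMeasurableAtFilter isOpen_Ioo x hx
      · exact hgcont.continuousAt hIccmem
    -- derivatives of the factors
    have hE : HasDerivAt (ES A') (A' x * ES A' x) x := ES_hasDerivAt hA'c hx
    have hF : HasDerivAt (FS B') (FS B' x * B' x) x := FS_hasDerivAt hB'c hx
    have hMid : HasDerivAt (fun y => G y + C) (g x) x := hGderiv.add_const C
    have hprod := HasDerivAt.matrix_mul
      (HasDerivAt.matrix_mul hE hMid) hF
    -- inverse identities
    have inv1 : ES A' x * FS (fun s => -A' s) x = 1 := ES_mul_FS_neg hA'c hx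
    have inv2 : ES (fun s => -B' s) x * FS B' x = 1 := ES_neg_mul_FS hB'c hx
    -- the middle term
    have hmid : ES A' x * g x * FS B' x = P' x := by
      rw [hg]
      simp only
      simp only [← Matrix.mul_assoc]
      rw [inv1, Matrix.one_mul, Matrix.mul_assoc, inv2, Matrix.mul_one]
    -- rewrite derivative value
    have hval : (A' x * ES A' x * (G x + C) + ES A' x * g x) * FS B' x
        + ES A' x * (G x + C) * (FS B' x * B' x)
        = A x * U x + U x * B x + P x := by
      have hxI : x ∈ Set.Icc (0:ℝ) b := Set.Ioo_subset_Icc_self hx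
      rw [hUV x hxI, hAeq x hxI, hBeq x hxI, hPeq x hxI, hV]
      simp only
      rw [Matrix.add_mul]
      have t1 : A' x * ES A' x * (G x + C) * FS B' x
          = A' x * (ES A' x * (G x + C) * FS B' x) := by
        simp only [Matrix.mul_assoc]
      have t3 : ES A' x * (G x + C) * (FS B' x * B' x)
          = ES A' x * (G x + C) * FS B' x * B' x := by
        simp only [Matrix.mul_assoc]
      rw [t1, t3, hmid]
      abel
    -- transfer to U
    have hEq : U =ᶠ[nhds x] V := by
      filter_upwards [isOpen_Ioo.mem_nhds hx] with t ht
      exact hUV t (Set.Ioo_subset_Icc_self ht)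
    have hVd : HasDerivAt V (A x * U x + U x * B x + P x) x := by
      rw [← hval]
      exact hprod
    exact hVd.congr_of_eventuallyEq hEq
  · rw [hU 0]
    rw [intervalIntegral.integral_same, ES_zero, FS_zero, zero_add,
      Matrix.one_mul, Matrix.mul_one]
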